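/- arXiv:1706.02212 — 2 statements merged into one kernel-verified Lean document; each statement's English description precedes it below -/
import Mathlib

section
/- Let d ≥ 2, let q = (μ₁,…,μ_d) ∈ Δ_d with μ₁ ≥ … ≥ μ_d, let ε ∈ (0,1], and assume (1/2)Σ_{i=1}^d |μ_i − 1/d| > ε. Let (α₁, n) and (α₂, m) be the unique pairs with Σ_{i=d−n+1}^d |α₁ − μ_i| = ε, μ_{d−n+1} < α₁ ≤ μ_{d−n}, Σ_{j=1}^m |α₂ − μ_j| = ε, and μ_{m+1} ≤ α₂ < μ_m. Define p*_ε(q) ∈ ℝ^d by: entry α₂ in positions 1,…,m; entry μ_i in positions i = m+1,…,d−n; and entry α₁ in positions d−n+1,…,d. Then p*_ε(q) ∈ Δ_d, all its entries are strictly positive, (1/2)‖p*_ε(q) − q‖₁ = ε, and p*_ε(q) ≺ p for every p ∈ B_ε(q). -/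
open scoped BigOperators

noncomputable section

/-- `lowCond μ ε α n` : `(α, n) = (α₁, n)` satisfies `Σ_{i=d−n+1}^d |α − μᵢ| = ε` and
`μ_{d−n+1} < α ≤ μ_{d−n}` (the latter expressed entrywise, which for non-increasing `μ` is
equivalent). -/
def lowCond {d : ℕ} (μ : Fin d → ℝ) (ε α : ℝ) (n : ℕ) : Prop :=
  0 ≤ α ∧ α ≤ 1 ∧ 1 ≤ n ∧ n ≤ d - 1 ∧
  (∑ i : Fin d, if d - n ≤ (i : ℕ) then |α - μ i| else 0) = ε ∧
  (∀ i : Fin d, d - n ≤ (i : ℕ) → μ i < α) ∧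
  (∀ i : Fin d, (i : ℕ) < d - n → α ≤ μ i)

/-- `highCond μ ε α m` : `(α, m) = (α₂, m)` satisfies `Σ_{j=1}^m |α − μⱼ| = ε` and
`μ_{m+1} ≤ α < μ_m` (the latter expressed entrywise, which for non-increasing `μ` is
equivalent). -/
def highCond {d : ℕ} (μ : Fin d → ℝ) (ε α : ℝ) (m : ℕ) : Prop :=
  0 ≤ α ∧ α ≤ 1 ∧ 1 ≤ m ∧ m ≤ d - 1 ∧
  (∑ i : Fin d, if (i : ℕ) < m then |α - μ i| else 0) = ε ∧
  (∀ i : Fin d, (i : ℕ) < m → α < μ i) ∧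
  (∀ i : Fin d, m ≤ (i : ℕ) → μ i ≤ α)

/-- Sum of the `k` largest entries of a vector (counted with multiplicity). -/
noncomputable def kMaxSum {d : ℕ} (v : Fin d → ℝ) (k : ℕ) : ℝ :=
  sSup ((fun s : Finset (Fin d) => ∑ i ∈ s, v i) '' {s | s.card = k})

/-- Vector majorization `x ≺ y`: the partial sums of the `k` largest entries of `x` are at
most those of `y` for `k = 1, …, d − 1`, and the total sums agree. -/
def vMaj {d : ℕ} (x y : Fin d → ℝ) : Prop :=
  (∀ k, 1 ≤ k → k ≤ d - 1 → kMaxSum x k ≤ kMaxSum y k) ∧ (∑ i, x i) = (∑ i, y i)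

namespace Aux
open Finset
variable {d : ℕ}

def seg (d k : ℕ) : Finset (Fin d) := Finset.univ.filter (fun i : Fin d => (i : ℕ) < k)
def cseg (d k : ℕ) : Finset (Fin d) := Finset.univ.filter (fun i : Fin d => k ≤ (i : ℕ))
def mid (d j k : ℕ) : Finset (Fin d) :=
  Finset.univ.filter (fun i : Fin d => j ≤ (i : ℕ) ∧ (i : ℕ) < k)

lemma mem_seg {k : ℕ} {i : Fin d} : i ∈ seg d k ↔ (i : ℕ) < k := by simp [seg]
lemma mem_cseg {k : ℕ} {i : Fin d} : i ∈ cseg d k ↔ k ≤ (i : ℕ) := by simp [cseg]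
lemma mem_mid {j k : ℕ} {i : Fin d} : i ∈ mid d j k ↔ j ≤ (i : ℕ) ∧ (i : ℕ) < k := by
  simp [mid]

lemma sum_seg (v : Fin d → ℝ) (k : ℕ) :
    ∑ i ∈ seg d k, v i = ∑ i : Fin d, if (i : ℕ) < k then v i else 0 :=
  Finset.sum_filter _ _

lemma sum_cseg (v : Fin d → ℝ) (k : ℕ) :
    ∑ i ∈ cseg d k, v i = ∑ i : Fin d, if k ≤ (i : ℕ) then v i else 0 :=
  Finset.sum_filter _ _

lemma cseg_eq_not {k : ℕ} : cseg d k = Finset.univ.filter (fun i : Fin d => ¬ ((i : ℕ) < k)) := by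
  ext i; simp [cseg]

lemma total_split (v : Fin d → ℝ) (k : ℕ) :
    ∑ i, v i = ∑ i ∈ seg d k, v i + ∑ i ∈ cseg d k, v i := by
  rw [← Finset.sum_filter_add_sum_filter_not Finset.univ (fun i : Fin d => (i : ℕ) < k) v,
    cseg_eq_not]
  rfl

lemma seg_split (v : Fin d → ℝ) {j k : ℕ} (h : j ≤ k) :
    ∑ i ∈ seg d k, v i = ∑ i ∈ seg d j, v i + ∑ i ∈ mid d j k, v i := by
  have e1 : seg d j = (seg d k).filter (fun i : Fin d => (i : ℕ) < j) := by
    ext i; simp [seg]; omega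
  have e2 : mid d j k = (seg d k).filter (fun i : Fin d => ¬ ((i : ℕ) < j)) := by
    ext i; simp [seg, mid]; omega
  rw [e1, e2, Finset.sum_filter_add_sum_filter_not]

lemma cseg_split (v : Fin d → ℝ) {j k : ℕ} (h : j ≤ k) :
    ∑ i ∈ cseg d j, v i = ∑ i ∈ mid d j k, v i + ∑ i ∈ cseg d k, v i := by
  have e1 : mid d j k = (cseg d j).filter (fun i : Fin d => (i : ℕ) < k) := by
    ext i; simp [cseg, mid]
  have e2 : cseg d k = (cseg d j).filter (fun i : Fin d => ¬ ((i : ℕ) < k)) := by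
    ext i; simp [cseg]; omega
  rw [e1, e2, Finset.sum_filter_add_sum_filter_not]

lemma seg_eq_map {k : ℕ} (hk : k ≤ d) :
    seg d k = Finset.map (Fin.castLEEmb hk) Finset.univ := by
  ext i
  simp only [mem_seg, Finset.mem_map, Finset.mem_univ, true_and]
  constructor
  · intro h; exact ⟨⟨i, h⟩, by simp [Fin.castLEEmb, Fin.castLE, Fin.ext_iff]⟩
  · rintro ⟨j, rfl⟩; simpa using j.2

lemma card_seg {k : ℕ} (hk : k ≤ d) : (seg d k).card = k := by
  rw [seg_eq_map hk]; simp

lemma card_cseg {k : ℕ} (hk : k ≤ d) : (cseg d k).card = d - k := by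
  have h := Finset.card_filter_add_card_filter_not
    (s := (Finset.univ : Finset (Fin d))) (p := fun i : Fin d => (i : ℕ) < k)
  rw [← cseg_eq_not] at h
  have h2 : (seg d k).card = k := card_seg hk
  simp only [Finset.card_univ, Fintype.card_fin] at h
  have h3 : (seg d k).card + (cseg d k).card = d := h
  omega

lemma card_mid {j k : ℕ} (hj : j ≤ k) (hk : k ≤ d) : (mid d j k).card = k - j := by
  have e : mid d j k = seg d k \ seg d j := by ext i; simp [seg, mid]; omega
  rw [e, Finset.card_sdiff_of_subset (by intro i; simp [seg]; omega), card_seg hk,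
    card_seg (le_trans hj hk)]

lemma half_dist (f g : Fin d → ℝ) (h : ∑ i, f i = ∑ i, g i) :
    ∑ i, max (g i - f i) 0 = (1 / 2) * ∑ i, |f i - g i| := by
  have key : ∀ i, |f i - g i| = 2 * max (g i - f i) 0 + (f i - g i) := by
    intro i
    rcases le_or_gt (g i) (f i) with h1 | h1
    · rw [abs_of_nonneg (by linarith), max_eq_right (by linarith)]; ring
    · rw [abs_of_neg (by linarith), max_eq_left (by linarith)]; ring
  have h2 : ∑ i, |f i - g i| = 2 * ∑ i, max (g i - f i) 0 + (∑ i, f i - ∑ i, g i) := by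
    rw [Finset.mul_sum, ← Finset.sum_sub_distrib, ← Finset.sum_add_distrib]
    exact Finset.sum_congr rfl (fun i _ => key i)
  rw [h2, h]; ring

lemma bddAbove_kMaxSum (v : Fin d → ℝ) (k : ℕ) :
    BddAbove ((fun s : Finset (Fin d) => ∑ i ∈ s, v i) '' {s | s.card = k}) :=
  ((Set.toFinite _).image _).bddAbove

lemma le_kMaxSum (v : Fin d → ℝ) {s : Finset (Fin d)} {k : ℕ} (h : s.card = k) :
    ∑ i ∈ s, v i ≤ kMaxSum v k :=
  le_csSup (bddAbove_kMaxSum v k) ⟨s, h, rfl⟩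

lemma nonempty_sets (v : Fin d → ℝ) {k : ℕ} (hk : k ≤ d) :
    ((fun s : Finset (Fin d) => ∑ i ∈ s, v i) '' {s | s.card = k}).Nonempty := by
  obtain ⟨t, _, ht⟩ := Finset.exists_subset_card_eq
    (s := (Finset.univ : Finset (Fin d))) (n := k) (by simpa using hk)
  exact ⟨_, ⟨t, ht, rfl⟩⟩

lemma strictMono_nat_le {k : ℕ} (f : Fin k → ℕ) (hf : StrictMono f) :
    ∀ t (ht : t < k), t ≤ f ⟨t, ht⟩ := by
  intro t
  induction t with
  | zero => intro _; exact Nat.zero_le _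
  | succ s ih =>
      intro ht
      have hs : s < k := Nat.lt_of_succ_lt ht
      have h1 := hf (show (⟨s, hs⟩ : Fin k) < ⟨s+1, ht⟩ by simp [Fin.lt_def])
      have h2 := ih hs
      omega

lemma sum_le_seg (v : Fin d → ℝ) (hv : ∀ i j : Fin d, i ≤ j → v j ≤ v i)
    (s : Finset (Fin d)) {k : ℕ} (hs : s.card = k) (hk : k ≤ d) :
    ∑ i ∈ s, v i ≤ ∑ i ∈ seg d k, v i := by
  have hmap : s = Finset.map (s.orderEmbOfFin hs).toEmbedding Finset.univ := by
    ext i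
    simp only [Finset.mem_map, Finset.mem_univ, true_and, RelEmbedding.coe_toEmbedding]
    constructor
    · intro hi
      have h : i ∈ Set.range (s.orderEmbOfFin hs) := by
        rw [Finset.range_orderEmbOfFin]; exact hi
      obtain ⟨j, hj⟩ := h; exact ⟨j, hj⟩
    · rintro ⟨j, rfl⟩
      have h : (s.orderEmbOfFin hs) j ∈ Set.range (s.orderEmbOfFin hs) := ⟨j, rfl⟩
      rw [Finset.range_orderEmbOfFin] at h; exact h
  rw [hmap, Finset.sum_map, seg_eq_map hk, Finset.sum_map]
  apply Finset.sum_le_sum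
  intro j _
  apply hv
  have hmono : StrictMono (fun t : Fin k => ((s.orderEmbOfFin hs t : Fin d) : ℕ)) := by
    intro a b hab
    exact (Fin.lt_def).1 ((s.orderEmbOfFin hs).strictMono hab)
  have h := strictMono_nat_le _ hmono j j.2
  simpa [Fin.le_def, Fin.castLEEmb] using h

lemma kMaxSum_sorted (v : Fin d → ℝ) (hv : ∀ i j : Fin d, i ≤ j → v j ≤ v i)
    {k : ℕ} (hk : k ≤ d) :
    kMaxSum v k = ∑ i ∈ seg d k, v i := by
  apply le_antisymm
  · apply csSup_le (nonempty_sets _ hk)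
    rintro x ⟨s, hs, rfl⟩
    exact sum_le_seg v hv s hs hk
  · exact le_kMaxSum v (card_seg hk)

lemma kMaxSum_perm_le (v : Fin d → ℝ) (σ : Equiv.Perm (Fin d)) {k : ℕ} (hk : k ≤ d) :
    kMaxSum (v ∘ σ) k ≤ kMaxSum v k := by
  apply csSup_le (nonempty_sets _ hk)
  rintro x ⟨s, hs, rfl⟩
  have h : ∑ i ∈ s, (v ∘ σ) i = ∑ i ∈ s.image σ, v i := by
    rw [Finset.sum_image (by intro a _ b _ h; exact σ.injective h)]
    rfl
  simp only []
  rw [h]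
  exact le_kMaxSum v (by rw [Finset.card_image_of_injective _ σ.injective, hs])

lemma kMaxSum_perm (v : Fin d → ℝ) (σ : Equiv.Perm (Fin d)) {k : ℕ} (hk : k ≤ d) :
    kMaxSum (v ∘ σ) k = kMaxSum v k := by
  refine le_antisymm (kMaxSum_perm_le v σ hk) ?_
  have h := kMaxSum_perm_le (v ∘ ⇑σ) σ.symm (k := k) hk
  have h2 : (v ∘ ⇑σ) ∘ ⇑σ.symm = v := by
    funext i; simp
  rwa [h2] at h

end Aux

/-- The optimal vector `p*`: `α₂` on the first `m` coordinates, `μ` in the middle,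
`α₁` on the last `n` coordinates. -/
def pstar {d : ℕ} (μ : Fin d → ℝ) (α₁ α₂ : ℝ) (n m : ℕ) (i : Fin d) : ℝ :=
  if (i : ℕ) < m then α₂ else if (i : ℕ) < d - n then μ i else α₁

set_option maxHeartbeats 2000000 in
/-- The vector `p*_ε(q)` (equal to `α₂` on the first `m` coordinates, to
`μᵢ` in the middle, and to `α₁` on the last `n` coordinates) is a strictly positive
probability vector at trace distance exactly `ε` from `q = μ`, and it is majorized by every
`p ∈ B_ε(q)`. -/
theorem pstar_minimal_in_majorization
    {d : ℕ} (hd : 2 ≤ d) (μ : Fin d → ℝ)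
    (hμ0 : ∀ i, 0 ≤ μ i) (hμ1 : ∑ i, μ i = 1)
    (hsort : ∀ i j : Fin d, i ≤ j → μ j ≤ μ i)
    (ε : ℝ) (hε : ε ∈ Set.Ioc (0 : ℝ) 1)
    (hfar : ε < (1 / 2 : ℝ) * ∑ i, |μ i - 1 / d|)
    (α₁ : ℝ) (n : ℕ) (α₂ : ℝ) (m : ℕ)
    (h₁ : lowCond μ ε α₁ n) (h₂ : highCond μ ε α₂ m) :
    ((∀ i : Fin d,
        0 < (if (i : ℕ) < m then α₂ else if (i : ℕ) < d - n then μ i else α₁)) ∧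
     (∑ i : Fin d, (if (i : ℕ) < m then α₂ else if (i : ℕ) < d - n then μ i else α₁)) = 1 ∧
     (1 / 2 : ℝ) * (∑ i : Fin d,
        |(if (i : ℕ) < m then α₂ else if (i : ℕ) < d - n then μ i else α₁) - μ i|) = ε) ∧
    (∀ p : Fin d → ℝ, (∀ i, 0 ≤ p i) → ∑ i, p i = 1 →
      (1 / 2 : ℝ) * ∑ i, |p i - μ i| ≤ ε →
      vMaj (fun i : Fin d => if (i : ℕ) < m then α₂ else if (i : ℕ) < d - n then μ i else α₁)
        p) := by
  classical
  obtain ⟨hε0, hε1⟩ := hε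
  unfold lowCond at h₁
  unfold highCond at h₂
  obtain ⟨ha10, ha11, hn1, hnd1, hs1, hlow, hlow'⟩ := h₁
  obtain ⟨ha20, ha21, hm1, hmd1, hs2, hhigh, hhigh'⟩ := h₂
  have hdpos : 0 < d := by omega
  have hdn_lt : d - n < d := by omega
  have hdn_pos : 1 ≤ d - n := by omega
  have hmd : m < d := by omega
  have hdR : (0:ℝ) < (d:ℝ) := by exact_mod_cast hdpos
  -- the two ε-identities
  have e1 : ∑ i ∈ Aux.cseg d (d - n), (α₁ - μ i) = ε := by
    have hc : ∀ i ∈ Aux.cseg d (d - n), α₁ - μ i = |α₁ - μ i| := by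
      intro i hi
      exact (abs_of_pos (by linarith only [hlow i (Aux.mem_cseg.1 hi)])).symm
    rw [Finset.sum_congr rfl hc, Aux.sum_cseg]
    exact hs1
  have e2 : ∑ i ∈ Aux.seg d m, (μ i - α₂) = ε := by
    have hc : ∀ i ∈ Aux.seg d m, μ i - α₂ = |α₂ - μ i| := by
      intro i hi
      rw [abs_sub_comm]
      exact (abs_of_pos (by linarith only [hhigh i (Aux.mem_seg.1 hi)])).symm
    rw [Finset.sum_congr rfl hc, Aux.sum_seg]
    exact hs2
  -- distance to the uniform distribution
  have hsum_unif : ∑ _i : Fin d, (1:ℝ)/d = 1 := by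
    rw [Finset.sum_const, Finset.card_univ, Fintype.card_fin, nsmul_eq_mul]
    field_simp
  have hunif1 : ∑ i, max ((1:ℝ)/d - μ i) 0 = (1/2) * ∑ i, |μ i - 1/(d:ℝ)| :=
    Aux.half_dist μ (fun _ => 1/d) (by rw [hμ1, hsum_unif])
  have hunif2 : ∑ i, max (μ i - (1:ℝ)/d) 0 = (1/2) * ∑ i, |μ i - 1/(d:ℝ)| := by
    have h := Aux.half_dist (fun _ => (1:ℝ)/d) μ (by rw [hμ1, hsum_unif])
    rw [h]
    congr 1
    exact Finset.sum_congr rfl (fun i _ => abs_sub_comm _ _)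
  have ha1d : α₁ ≤ 1/(d:ℝ) := by
    by_contra hcon
    push_neg at hcon
    have hb : ∑ i, max ((1:ℝ)/d - μ i) 0 ≤ ε := by
      rw [Aux.total_split (fun i => max ((1:ℝ)/d - μ i) 0) (d - n)]
      have z1 : ∑ i ∈ Aux.seg d (d - n), max ((1:ℝ)/d - μ i) 0 = 0 :=
        Finset.sum_eq_zero (fun i hi => by
          have h1 := hlow' i (Aux.mem_seg.1 hi)
          exact max_eq_right (by linarith only [h1, hcon]))
      have z2 : ∑ i ∈ Aux.cseg d (d - n), max ((1:ℝ)/d - μ i) 0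
          ≤ ∑ i ∈ Aux.cseg d (d - n), (α₁ - μ i) :=
        Finset.sum_le_sum (fun i hi => by
          have h1 := hlow i (Aux.mem_cseg.1 hi)
          exact max_le (by linarith only [hcon]) (by linarith only [h1]))
      rw [e1] at z2
      rw [z1]
      linarith only [z2]
    rw [hunif1] at hb
    linarith only [hb, hfar]
  have ha2d : 1/(d:ℝ) ≤ α₂ := by
    by_contra hcon
    push_neg at hcon
    have hb : ∑ i, max (μ i - (1:ℝ)/d) 0 ≤ ε := by
      rw [Aux.total_split (fun i => max (μ i - (1:ℝ)/d) 0) m]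
      have z1 : ∑ i ∈ Aux.cseg d m, max (μ i - (1:ℝ)/d) 0 = 0 :=
        Finset.sum_eq_zero (fun i hi => by
          have h1 := hhigh' i (Aux.mem_cseg.1 hi)
          exact max_eq_right (by linarith only [h1, hcon]))
      have z2 : ∑ i ∈ Aux.seg d m, max (μ i - (1:ℝ)/d) 0
          ≤ ∑ i ∈ Aux.seg d m, (μ i - α₂) :=
        Finset.sum_le_sum (fun i hi => by
          have h1 := hhigh i (Aux.mem_seg.1 hi)
          exact max_le (by linarith only [hcon]) (by linarith only [h1]))
      rw [e2] at z2
      rw [z1]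
      linarith only [z2]
    rw [hunif2] at hb
    linarith only [hb, hfar]
  have hmn : m ≤ d - n := by
    by_contra hcon
    push_neg at hcon
    have h1 := hhigh ⟨d - n, hdn_lt⟩ (by show d - n < m; exact hcon)
    have h2 := hlow ⟨d - n, hdn_lt⟩ (by show d - n ≤ d - n; omega)
    linarith only [h1, h2, ha1d, ha2d]
  have ha12 : α₁ ≤ α₂ := le_trans ha1d ha2d
  -- basic facts about pstar
  have hPlo : ∀ i : Fin d, (i:ℕ) < m → pstar μ α₁ α₂ n m i = α₂ := by
    intro i hi
    simp only [pstar]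
    rw [if_pos hi]
  have hPmid : ∀ i : Fin d, m ≤ (i:ℕ) → (i:ℕ) < d - n → pstar μ α₁ α₂ n m i = μ i := by
    intro i h1 h2
    simp only [pstar]
    rw [if_neg (by omega), if_pos h2]
  have hPhi : ∀ i : Fin d, d - n ≤ (i:ℕ) → pstar μ α₁ α₂ n m i = α₁ := by
    intro i h1
    simp only [pstar]
    rw [if_neg (by omega), if_neg (by omega)]
  have hPsort : ∀ i j : Fin d, i ≤ j → pstar μ α₁ α₂ n m j ≤ pstar μ α₁ α₂ n m i := by
    intro i j hij
    have hij' : (i:ℕ) ≤ (j:ℕ) := hij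
    by_cases hjm : (j:ℕ) < m
    · rw [hPlo j hjm, hPlo i (by omega)]
    · by_cases hjn : (j:ℕ) < d - n
      · rw [hPmid j (by omega) hjn]
        by_cases him : (i:ℕ) < m
        · rw [hPlo i him]
          exact hhigh' j (by omega)
        · rw [hPmid i (by omega) (by omega)]
          exact hsort i j hij
      · rw [hPhi j (by omega)]
        by_cases him : (i:ℕ) < m
        · rw [hPlo i him]; exact ha12
        · by_cases hin : (i:ℕ) < d - n
          · rw [hPmid i (by omega) hin]
            exact hlow' i hin
          · rw [hPhi i (by omega)]
  have ha1pos : 0 < α₁ := by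
    obtain ⟨i₁, hi₁⟩ : ∃ i : Fin d, d - n ≤ (i:ℕ) := ⟨⟨d-1, by omega⟩, by show d - n ≤ d - 1; omega⟩
    linarith only [hlow i₁ hi₁, hμ0 i₁]
  have ha2pos : 0 < α₂ := lt_of_lt_of_le (div_pos one_pos hdR) ha2d
  have hPpos : ∀ i : Fin d, 0 < pstar μ α₁ α₂ n m i := by
    intro i
    by_cases h1 : (i:ℕ) < m
    · rw [hPlo i h1]; exact ha2pos
    · by_cases h2 : (i:ℕ) < d - n
      · rw [hPmid i (by omega) h2]
        exact lt_of_lt_of_le ha1pos (hlow' i h2)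
      · rw [hPhi i (by omega)]; exact ha1pos
  -- sum pieces
  have hcard_seg_m : (Aux.seg d m).card = m := Aux.card_seg (by omega)
  have hcard_cseg_n : (Aux.cseg d (d - n)).card = n := by
    rw [Aux.card_cseg (by omega)]; omega
  have hsegPm : ∑ i ∈ Aux.seg d m, pstar μ α₁ α₂ n m i = (m:ℝ) * α₂ := by
    rw [Finset.sum_congr rfl (fun i hi => hPlo i (Aux.mem_seg.1 hi)), Finset.sum_const,
      hcard_seg_m, nsmul_eq_mul]
  have hmidP : ∑ i ∈ Aux.mid d m (d - n), pstar μ α₁ α₂ n m i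
      = ∑ i ∈ Aux.mid d m (d - n), μ i :=
    Finset.sum_congr rfl (fun i hi => hPmid i (Aux.mem_mid.1 hi).1 (Aux.mem_mid.1 hi).2)
  have hcsegP : ∑ i ∈ Aux.cseg d (d - n), pstar μ α₁ α₂ n m i = (n:ℝ) * α₁ := by
    rw [Finset.sum_congr rfl (fun i hi => hPhi i (Aux.mem_cseg.1 hi)), Finset.sum_const,
      hcard_cseg_n, nsmul_eq_mul]
  have e1' : (n:ℝ) * α₁ - ∑ i ∈ Aux.cseg d (d - n), μ i = ε := by
    rw [← e1, Finset.sum_sub_distrib, Finset.sum_const, hcard_cseg_n, nsmul_eq_mul]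
  have e2' : (∑ i ∈ Aux.seg d m, μ i) - (m:ℝ) * α₂ = ε := by
    rw [← e2, Finset.sum_sub_distrib, Finset.sum_const, hcard_seg_m, nsmul_eq_mul]
  have hμsplit : ∑ i ∈ Aux.seg d m, μ i + ∑ i ∈ Aux.mid d m (d - n), μ i
      + ∑ i ∈ Aux.cseg d (d - n), μ i = 1 := by
    have h1 := Aux.total_split μ (d - n)
    have h2 := Aux.seg_split μ hmn
    rw [hμ1] at h1
    linarith only [h1, h2]
  have hPtotal : ∑ i, pstar μ α₁ α₂ n m i = 1 := by
    have h1 := Aux.total_split (pstar μ α₁ α₂ n m) (d - n)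
    have h2 := Aux.seg_split (pstar μ α₁ α₂ n m) hmn
    rw [h2, hsegPm, hmidP, hcsegP] at h1
    linarith only [h1, hμsplit, e1', e2']
  have hPdist : ∑ i, |pstar μ α₁ α₂ n m i - μ i| = 2 * ε := by
    have h1 := Aux.total_split (fun i => |pstar μ α₁ α₂ n m i - μ i|) (d - n)
    have h2 := Aux.seg_split (fun i => |pstar μ α₁ α₂ n m i - μ i|) hmn
    have z1 : ∑ i ∈ Aux.seg d m, |pstar μ α₁ α₂ n m i - μ i| = ε := by
      rw [← e2]
      refine Finset.sum_congr rfl (fun i hi => ?_)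
      rw [hPlo i (Aux.mem_seg.1 hi), abs_of_neg (by linarith only [hhigh i (Aux.mem_seg.1 hi)])]
      ring
    have z2 : ∑ i ∈ Aux.mid d m (d - n), |pstar μ α₁ α₂ n m i - μ i| = 0 :=
      Finset.sum_eq_zero (fun i hi => by
        rw [hPmid i (Aux.mem_mid.1 hi).1 (Aux.mem_mid.1 hi).2]
        simp)
    have z3 : ∑ i ∈ Aux.cseg d (d - n), |pstar μ α₁ α₂ n m i - μ i| = ε := by
      rw [← e1]
      refine Finset.sum_congr rfl (fun i hi => ?_)
      rw [hPhi i (Aux.mem_cseg.1 hi),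
        abs_of_pos (by linarith only [hlow i (Aux.mem_cseg.1 hi)])]
    rw [h2] at h1
    rw [z1, z2, z3] at h1
    linarith only [h1]
  have hhalf : (1/2:ℝ) * (∑ i, |pstar μ α₁ α₂ n m i - μ i|) = ε := by
    rw [hPdist]; ring
  -- the majorization statement
  have hmaj : ∀ p : Fin d → ℝ, (∀ i, 0 ≤ p i) → ∑ i, p i = 1 →
      (1/2:ℝ) * ∑ i, |p i - μ i| ≤ ε → vMaj (pstar μ α₁ α₂ n m) p := by
    intro p hp0 hp1 hpd
    have hposle : ∑ i, max (μ i - p i) 0 ≤ ε := by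
      rw [Aux.half_dist p μ (by rw [hp1, hμ1])]
      exact hpd
    have keyM : ∀ k, k ≤ d → (∑ i ∈ Aux.seg d k, μ i) - ε ≤ kMaxSum p k := by
      intro k hk
      have h1 : ∑ i ∈ Aux.seg d k, (μ i - p i) ≤ ε :=
        calc ∑ i ∈ Aux.seg d k, (μ i - p i)
            ≤ ∑ i ∈ Aux.seg d k, max (μ i - p i) 0 :=
              Finset.sum_le_sum (fun i _ => le_max_left _ _)
          _ ≤ ∑ i, max (μ i - p i) 0 :=
              Finset.sum_le_sum_of_subset_of_nonneg (Finset.subset_univ _)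
                (fun i _ _ => le_max_right _ _)
          _ ≤ ε := hposle
      have h2 : (∑ i ∈ Aux.seg d k, μ i) - ε ≤ ∑ i ∈ Aux.seg d k, p i := by
        rw [Finset.sum_sub_distrib] at h1
        linarith only [h1]
      exact le_trans h2 (Aux.le_kMaxSum p (Aux.card_seg hk))
    obtain ⟨σ, hσmono⟩ : ∃ σ : Equiv.Perm (Fin d), Monotone ((fun i => -p i) ∘ ⇑σ) :=
      ⟨Tuple.sort _, Tuple.monotone_sort _⟩
    set q : Fin d → ℝ := p ∘ ⇑σ with hq
    have hqsort : ∀ i j : Fin d, i ≤ j → q j ≤ q i := by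
      intro i j hij
      have h := hσmono hij
      simp only [Function.comp_apply] at h
      simp only [hq, Function.comp_apply]
      linarith only [h]
    have hkq : ∀ k, k ≤ d → kMaxSum p k = ∑ i ∈ Aux.seg d k, q i := by
      intro k hk
      rw [← Aux.kMaxSum_perm p σ hk, ← hq]
      exact Aux.kMaxSum_sorted q hqsort hk
    have hq1 : ∑ i, q i = 1 := by
      rw [hq]
      have h : ∑ i, (p ∘ ⇑σ) i = ∑ i, p (σ i) := rfl
      rw [h, Equiv.sum_comp σ p, hp1]
    show vMaj (pstar μ α₁ α₂ n m) p
    unfold vMaj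
    constructor
    · intro k hk1 hk2
      have hkd : k ≤ d := by omega
      rw [Aux.kMaxSum_sorted (pstar μ α₁ α₂ n m) hPsort hkd, hkq k hkd]
      rcases le_or_gt k m with hkm | hkm
      · -- case k ≤ m
        have hLP : ∑ i ∈ Aux.seg d k, pstar μ α₁ α₂ n m i = (k:ℝ) * α₂ := by
          rw [Finset.sum_congr rfl
            (fun i hi => hPlo i (lt_of_lt_of_le (Aux.mem_seg.1 hi) hkm)),
            Finset.sum_const, Aux.card_seg hkd, nsmul_eq_mul]
        rw [hLP]
        have hA2 : (m:ℝ) * α₂ ≤ ∑ i ∈ Aux.seg d m, q i := by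
          have h := keyM m (by omega)
          rw [hkq m (by omega)] at h
          linarith only [h, e2']
        obtain ⟨c, hcval⟩ : ∃ c : Fin d, (c:ℕ) = k - 1 := ⟨⟨k - 1, by omega⟩, rfl⟩
        have hb1 : (k:ℝ) * q c ≤ ∑ i ∈ Aux.seg d k, q i := by
          have h := Finset.card_nsmul_le_sum (Aux.seg d k) q (q c)
            (fun i hi => hqsort i c (by
              rw [Fin.le_def]
              have h2 := Aux.mem_seg.1 hi
              omega))
          rwa [Aux.card_seg hkd, nsmul_eq_mul] at h
        have hb2 : ∑ i ∈ Aux.mid d k m, q i ≤ ((m:ℝ) - k) * q c := by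
          have h := Finset.sum_le_card_nsmul (Aux.mid d k m) q (q c)
            (fun i hi => hqsort c i (by
              rw [Fin.le_def]
              have h2 := (Aux.mem_mid.1 hi).1
              omega))
          rw [Aux.card_mid hkm (by omega), nsmul_eq_mul, Nat.cast_sub hkm] at h
          exact h
        have hb3 := Aux.seg_split q hkm
        have hkm' : (k:ℝ) ≤ (m:ℝ) := by exact_mod_cast hkm
        have hk0 : (0:ℝ) ≤ (k:ℝ) := by positivity
        have hm0 : (0:ℝ) < (m:ℝ) := by exact_mod_cast (by omega : 0 < m)
        have t1 := mul_le_mul_of_nonneg_left hb1 (by linarith only [hkm'] : (0:ℝ) ≤ (m:ℝ) - (k:ℝ))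
        have t2 := mul_le_mul_of_nonneg_left hb2 hk0
        have t4 : (k:ℝ) * (∑ i ∈ Aux.seg d m, q i)
            = (k:ℝ) * (∑ i ∈ Aux.seg d k, q i) + (k:ℝ) * (∑ i ∈ Aux.mid d k m, q i) := by
          rw [hb3]; ring
        have t5 := mul_le_mul_of_nonneg_left hA2 hk0
        have t6 : (m:ℝ) * ((k:ℝ) * α₂) ≤ (m:ℝ) * (∑ i ∈ Aux.seg d k, q i) := by
          linarith only [t1, t2, t4, t5]
        exact (mul_le_mul_iff_right₀ hm0).mp t6
      · rcases le_or_gt k (d - n) with hkn | hkn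
        · -- middle case m < k ≤ d - n
          have hmk : m ≤ k := by omega
          have hLP : ∑ i ∈ Aux.seg d k, pstar μ α₁ α₂ n m i
              = (∑ i ∈ Aux.seg d k, μ i) - ε := by
            rw [Aux.seg_split (pstar μ α₁ α₂ n m) hmk, hsegPm]
            have hmidk : ∑ i ∈ Aux.mid d m k, pstar μ α₁ α₂ n m i
                = ∑ i ∈ Aux.mid d m k, μ i :=
              Finset.sum_congr rfl (fun i hi => hPmid i (Aux.mem_mid.1 hi).1
                (lt_of_lt_of_le (Aux.mem_mid.1 hi).2 hkn))
            rw [hmidk]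
            have h := Aux.seg_split μ hmk
            linarith only [h, e2']
          rw [hLP]
          have h := keyM k hkd
          rw [hkq k hkd] at h
          exact h
        · -- high case k > d - n
          have hnk : d - n ≤ k := by omega
          have hLP : ∑ i ∈ Aux.seg d k, pstar μ α₁ α₂ n m i
              = 1 - ((d:ℝ) - k) * α₁ := by
            have h1 := Aux.total_split (pstar μ α₁ α₂ n m) k
            rw [hPtotal] at h1
            have h2 : ∑ i ∈ Aux.cseg d k, pstar μ α₁ α₂ n m i = ((d:ℝ) - k) * α₁ := by
              rw [Finset.sum_congr rfl
                (fun i hi => hPhi i (le_trans hnk (Aux.mem_cseg.1 hi))),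
                Finset.sum_const, Aux.card_cseg hkd, nsmul_eq_mul, Nat.cast_sub hkd]
            linarith only [h1, h2]
          rw [hLP]
          have hq_split := Aux.total_split q k
          rw [hq1] at hq_split
          have hA2' : ∑ i ∈ Aux.cseg d (d - n), q i ≤ (n:ℝ) * α₁ := by
            have h1 := keyM (d - n) (by omega)
            rw [hkq (d - n) (by omega)] at h1
            have h2 := Aux.total_split q (d - n)
            rw [hq1] at h2
            have h3 := Aux.total_split μ (d - n)
            rw [hμ1] at h3
            linarith only [h1, h2, h3, e1']
          obtain ⟨c, hcval⟩ : ∃ c : Fin d, (c:ℕ) = k := ⟨⟨k, by omega⟩, rfl⟩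
          have hb1 : ∑ i ∈ Aux.cseg d k, q i ≤ ((d:ℝ) - k) * q c := by
            have h := Finset.sum_le_card_nsmul (Aux.cseg d k) q (q c)
              (fun i hi => hqsort c i (by
                rw [Fin.le_def]
                have h2 := Aux.mem_cseg.1 hi
                omega))
            rwa [Aux.card_cseg hkd, nsmul_eq_mul, Nat.cast_sub hkd] at h
          have hb2 : ((k:ℝ) - ((d:ℝ) - n)) * q c ≤ ∑ i ∈ Aux.mid d (d - n) k, q i := by
            have h := Finset.card_nsmul_le_sum (Aux.mid d (d - n) k) q (q c)
              (fun i hi => hqsort i c (by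
                rw [Fin.le_def]
                have h2 := (Aux.mem_mid.1 hi).2
                omega))
            rw [Aux.card_mid hnk hkd, nsmul_eq_mul] at h
            have hcast : ((k - (d - n) : ℕ) : ℝ) = (k:ℝ) - ((d:ℝ) - (n:ℝ)) := by
              have hh : (((d - n) : ℕ) : ℝ) = (d:ℝ) - (n:ℝ) := by
                rw [Nat.cast_sub (by omega)]
              rw [Nat.cast_sub hnk, hh]
            rwa [hcast] at h
          have hb3 := Aux.cseg_split q hnk
          have hn0 : (0:ℝ) < (n:ℝ) := by exact_mod_cast (by omega : 0 < n)
          have hdk0 : (0:ℝ) ≤ (d:ℝ) - (k:ℝ) := by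
            have h : (k:ℝ) ≤ (d:ℝ) := by exact_mod_cast hkd
            linarith only [h]
          have hnk' : (d:ℝ) - (k:ℝ) ≤ (n:ℝ) := by
            have h1 : (((d - n) : ℕ) : ℝ) ≤ (k:ℝ) := by exact_mod_cast hnk
            rw [Nat.cast_sub (by omega)] at h1
            linarith only [h1]
          have t1 := mul_le_mul_of_nonneg_left hb1
            (by linarith only [hnk'] : (0:ℝ) ≤ (n:ℝ) - ((d:ℝ) - (k:ℝ)))
          have t2 := mul_le_mul_of_nonneg_left hb2 hdk0
          have t4 : ((d:ℝ) - (k:ℝ)) * (∑ i ∈ Aux.cseg d (d - n), q i)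
              = ((d:ℝ) - (k:ℝ)) * (∑ i ∈ Aux.mid d (d - n) k, q i)
              + ((d:ℝ) - (k:ℝ)) * (∑ i ∈ Aux.cseg d k, q i) := by
            rw [hb3]; ring
          have t5 := mul_le_mul_of_nonneg_left hA2' hdk0
          have t6 : (n:ℝ) * (∑ i ∈ Aux.cseg d k, q i)
              ≤ (n:ℝ) * (((d:ℝ) - (k:ℝ)) * α₁) := by
            linarith only [t1, t2, t4, t5]
          have t7 := (mul_le_mul_iff_right₀ hn0).mp t6
          linarith only [hq_split, t7]
    · rw [hPtotal]
      exact hp1.symm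
  exact ⟨⟨hPpos, hPtotal, hhalf⟩, hmaj⟩
end
end

section
/- Let d ≥ 2, let q = (q₁,…,q_d) ∈ Δ_d with q₁ ≥ … ≥ q_d, and let ε ∈ (0,1]. Define p_{*,ε}(q) ∈ ℝ^d as follows: if q_d > ε, set p_{*,ε}(q) := (q₁+ε, q₂, …, q_{d−1}, q_d−ε); otherwise let ℓ ∈ {1,…,d−1} be the largest index with Q_ℓ := Σ_{j=d−ℓ+1}^d q_j ≤ ε; if ℓ = d−1 set p_{*,ε}(q) := (1,0,…,0); otherwise set p_{*,ε}(q) to have first entry q₁+ε, entries q_j in positions 2 ≤ j ≤ d−ℓ−1, entry q_{d−ℓ} − (ε − Q_ℓ) in position d−ℓ, and 0 in positions ≥ d−ℓ+1. Then p_{*,ε}(q) ∈ B_ε(q), and p ≺ p_{*,ε}(q) for every p ∈ B_ε(q). -/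
open scoped BigOperators

noncomputable section

/-- `Qsum q ℓ = Σ_{j=d−ℓ+1}^d q_j`, the sum of the `ℓ` smallest (last) entries of the
non-increasing vector `q`. -/
noncomputable def Qsum {d : ℕ} (q : Fin d → ℝ) (ℓ : ℕ) : ℝ :=
  ∑ i : Fin d, if d - ℓ ≤ (i : ℕ) then q i else 0

lemma le_kMaxSum {d : ℕ} (v : Fin d → ℝ) {s : Finset (Fin d)} {k : ℕ} (hs : s.card = k) :
    ∑ i ∈ s, v i ≤ kMaxSum v k :=
  le_csSup ((Set.toFinite _).bddAbove) ⟨s, hs, rfl⟩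

lemma kMaxSum_le {d : ℕ} (v : Fin d → ℝ) {k : ℕ} (hk : k ≤ d) {c : ℝ}
    (h : ∀ s : Finset (Fin d), s.card = k → ∑ i ∈ s, v i ≤ c) : kMaxSum v k ≤ c := by
  obtain ⟨t, -, ht⟩ := Finset.exists_subset_card_eq
    (show k ≤ (Finset.univ : Finset (Fin d)).card by simpa using hk)
  refine csSup_le ⟨_, ⟨t, ht, rfl⟩⟩ ?_
  rintro x ⟨s, hs, rfl⟩
  exact h s hs

lemma sum_le_sorted {d : ℕ} (q : Fin d → ℝ) (hsort : ∀ i j : Fin d, i ≤ j → q j ≤ q i)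
    {s : Finset (Fin d)} {k : ℕ} (hk : k < d) (hs : s.card = k) :
    ∑ i ∈ s, q i ≤ ∑ i ∈ Finset.Iio (⟨k, hk⟩ : Fin d), q i := by
  set m : Fin d := ⟨k, hk⟩
  set t := Finset.Iio m with ht
  have htc : t.card = k := Fin.card_Iio _
  have hcard : (s \ t).card = (t \ s).card := Finset.card_sdiff_comm (by rw [hs, htc])
  have h1 : ∑ i ∈ s \ t, q i ≤ (s \ t).card • q m := by
    refine Finset.sum_le_card_nsmul _ _ _ ?_
    intro i hi
    have : ¬ i < m := by simpa [ht] using (Finset.mem_sdiff.1 hi).2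
    exact hsort m i (le_of_not_gt this)
  have h2 : (t \ s).card • q m ≤ ∑ i ∈ t \ s, q i := by
    refine Finset.card_nsmul_le_sum _ _ _ ?_
    intro i hi
    have : i < m := by simpa [ht] using (Finset.mem_sdiff.1 hi).1
    exact hsort i m this.le
  calc ∑ i ∈ s, q i = ∑ i ∈ s ∩ t, q i + ∑ i ∈ s \ t, q i :=
        (Finset.sum_inter_add_sum_sdiff s t q).symm
    _ ≤ ∑ i ∈ s ∩ t, q i + ∑ i ∈ t \ s, q i := by
        refine add_le_add le_rfl (h1.trans ?_)
        rw [hcard]; exact h2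
    _ = ∑ i ∈ t ∩ s, q i + ∑ i ∈ t \ s, q i := by rw [Finset.inter_comm]
    _ = ∑ i ∈ t, q i := Finset.sum_inter_add_sum_sdiff t s q

lemma tv_bound {d : ℕ} (w q : Fin d → ℝ) (h : ∑ i, w i = ∑ i, q i) (s : Finset (Fin d)) :
    ∑ i ∈ s, (w i - q i) ≤ (1/2 : ℝ) * ∑ i, |w i - q i| := by
  have h1 : ∑ i ∈ s, (w i - q i) ≤ ∑ i ∈ s, (|w i - q i| + (w i - q i)) / 2 := by
    refine Finset.sum_le_sum ?_
    intro i _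
    have := le_abs_self (w i - q i)
    linarith
  have h2 : ∑ i ∈ s, (|w i - q i| + (w i - q i)) / 2
      ≤ ∑ i : Fin d, (|w i - q i| + (w i - q i)) / 2 := by
    refine Finset.sum_le_sum_of_subset_of_nonneg (Finset.subset_univ s) ?_
    intro i _ _
    have := abs_nonneg (w i - q i)
    have := neg_abs_le (w i - q i)
    linarith
  have h3 : ∑ i : Fin d, (|w i - q i| + (w i - q i)) / 2
      = (1/2 : ℝ) * ∑ i, |w i - q i| := by
    rw [← Finset.sum_div]
    rw [show (∑ i : Fin d, (|w i - q i| + (w i - q i)))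
        = (∑ i, |w i - q i|) + (∑ i, (w i - q i)) from Finset.sum_add_distrib]
    rw [Finset.sum_sub_distrib, h]
    ring
  linarith

/-- One-point ite sum keyed on `Fin.val`. -/
lemma sum_ite_val {d n : ℕ} (hn : n < d) (f : Fin d → ℝ) {s : Finset (Fin d)}
    (hmem : (⟨n, hn⟩ : Fin d) ∈ s) :
    ∑ i ∈ s, (if (i : ℕ) = n then f i else 0) = f ⟨n, hn⟩ := by
  rw [Finset.sum_eq_single (⟨n, hn⟩ : Fin d)]
  · simp
  · intro b _ hb
    have : (b : ℕ) ≠ n := fun h => hb (Fin.ext h)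
    simp [this]
  · intro h; exact absurd hmem h

lemma w_side {d : ℕ} (q w : Fin d → ℝ) (ε : ℝ)
    (hsort : ∀ i j : Fin d, i ≤ j → q j ≤ q i)
    (hq1 : ∑ i, q i = 1) (hw1 : ∑ i, w i = 1)
    (hwtv : (1/2 : ℝ) * ∑ i, |w i - q i| ≤ ε)
    {k : ℕ} (hk : k < d) {s : Finset (Fin d)} (hs : s.card = k) :
    ∑ i ∈ s, w i ≤ (∑ i ∈ Finset.Iio (⟨k, hk⟩ : Fin d), q i) + ε := by
  have h1 : ∑ i ∈ s, w i = ∑ i ∈ s, q i + ∑ i ∈ s, (w i - q i) := by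
    rw [← Finset.sum_add_distrib]
    exact Finset.sum_congr rfl fun i _ => by ring
  have h2 := sum_le_sorted q hsort hk hs
  have h3 := (tv_bound w q (hw1.trans hq1.symm) s).trans hwtv
  linarith

lemma sum_le_one {d : ℕ} (w : Fin d → ℝ) (hw0 : ∀ i, 0 ≤ w i) (hw1 : ∑ i, w i = 1)
    (s : Finset (Fin d)) : ∑ i ∈ s, w i ≤ 1 := by
  rw [← hw1]
  exact Finset.sum_le_sum_of_subset_of_nonneg (Finset.subset_univ s) fun i _ _ => hw0 i

/-- The vector `p_{*,ε}(q)` of Definition 13 lies in `B_ε(q)` and majorizes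
every `p ∈ B_ε(q)`. The hypothesis `hp` encodes the case analysis in the definition of
`p_{*,ε}(q)`. -/
theorem pstar_maximal_in_majorization
    {d : ℕ} (hd : 2 ≤ d) (q : Fin d → ℝ)
    (hq0 : ∀ i, 0 ≤ q i) (hq1 : ∑ i, q i = 1)
    (hsort : ∀ i j : Fin d, i ≤ j → q j ≤ q i)
    (ε : ℝ) (hε : ε ∈ Set.Ioc (0 : ℝ) 1)
    (p : Fin d → ℝ)
    (hp :
      -- Case `q_d > ε`:
      ((∀ i : Fin d, (i : ℕ) = d - 1 → ε < q i) ∧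
        p = fun i : Fin d =>
          if (i : ℕ) = 0 then q i + ε else if (i : ℕ) = d - 1 then q i - ε else q i) ∨
      -- Case `q_d ≤ ε`, with `ℓ` the largest index in `{1, …, d−1}` such that `Q_ℓ ≤ ε`:
      (∃ ℓ : ℕ, 1 ≤ ℓ ∧ ℓ ≤ d - 1 ∧
        (∀ i : Fin d, (i : ℕ) = d - 1 → q i ≤ ε) ∧
        Qsum q ℓ ≤ ε ∧ (∀ ℓ' : ℕ, ℓ < ℓ' → ℓ' ≤ d - 1 → ε < Qsum q ℓ') ∧
        ((ℓ = d - 1 ∧ p = fun i : Fin d => if (i : ℕ) = 0 then 1 else 0) ∨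
         (ℓ < d - 1 ∧ p = fun i : Fin d =>
            if (i : ℕ) = 0 then q i + ε
            else if (i : ℕ) < d - ℓ - 1 then q i
            else if (i : ℕ) = d - ℓ - 1 then q i - (ε - Qsum q ℓ)
            else 0)))) :
    ((∀ i, 0 ≤ p i) ∧ ∑ i, p i = 1 ∧ (1 / 2 : ℝ) * ∑ i, |p i - q i| ≤ ε) ∧
    (∀ w : Fin d → ℝ, (∀ i, 0 ≤ w i) → ∑ i, w i = 1 →
      (1 / 2 : ℝ) * ∑ i, |w i - q i| ≤ ε → vMaj w p) := by
  obtain ⟨hε0, hε1⟩ := hε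
  have hd0 : (0 : ℕ) < d := by omega
  rcases hp with ⟨hqd, rfl⟩ | ⟨ℓ, hℓ1, hℓd, hqd, hQ, hQmax, hcase⟩
  · -- Case 1: q_d > ε
    set p : Fin d → ℝ := fun i : Fin d =>
      if (i : ℕ) = 0 then q i + ε else if (i : ℕ) = d - 1 then q i - ε else q i with hpdef
    have hdiff : ∀ i : Fin d, p i - q i
        = (if (i : ℕ) = 0 then ε else 0) + (if (i : ℕ) = d - 1 then -ε else 0) := by
      intro i
      simp only [hpdef]
      split_ifs <;> first | ring1 | omega
    have hsum0 : ∑ i, (p i - q i) = 0 := by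
      rw [Finset.sum_congr rfl fun i _ => hdiff i, Finset.sum_add_distrib,
        sum_ite_val hd0 (fun _ => ε) (Finset.mem_univ _),
        sum_ite_val (show d - 1 < d by omega) (fun _ => -ε) (Finset.mem_univ _)]
      ring
    have hsump : ∑ i, p i = 1 := by
      have : ∑ i, p i = ∑ i, q i + ∑ i, (p i - q i) := by
        rw [← Finset.sum_add_distrib]
        exact Finset.sum_congr rfl fun i _ => by ring
      rw [this, hsum0, hq1]; ring
    have habs : ∀ i : Fin d, |p i - q i|
        = (if (i : ℕ) = 0 then ε else 0) + (if (i : ℕ) = d - 1 then ε else 0) := by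
      intro i
      rw [hdiff i]
      split_ifs <;> first | omega | (exfalso; omega) | simp [abs_neg, abs_of_nonneg hε0.le]
    have habssum : ∑ i, |p i - q i| = 2 * ε := by
      rw [Finset.sum_congr rfl fun i _ => habs i, Finset.sum_add_distrib,
        sum_ite_val hd0 (fun _ => ε) (Finset.mem_univ _),
        sum_ite_val (show d - 1 < d by omega) (fun _ => ε) (Finset.mem_univ _)]
      ring
    refine ⟨⟨?_, hsump, by rw [habssum]; linarith⟩, ?_⟩
    · intro i
      simp only [hpdef]
      split_ifs with h1 h2
      · have := hq0 i; linarith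
      · have := hqd i h2; linarith
      · exact hq0 i
    · intro w hw0 hw1 hwtv
      refine ⟨?_, by rw [hw1, hsump]⟩
      intro k hk1 hkd
      have hkd' : k < d := by omega
      have hlow : (∑ i ∈ Finset.Iio (⟨k, hkd'⟩ : Fin d), q i) + ε ≤ kMaxSum p k := by
        have hcard : (Finset.Iio (⟨k, hkd'⟩ : Fin d)).card = k := Fin.card_Iio _
        have hps : ∑ i ∈ Finset.Iio (⟨k, hkd'⟩ : Fin d), p i
            = (∑ i ∈ Finset.Iio (⟨k, hkd'⟩ : Fin d), q i) + ε := by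
          have e1 : ∑ i ∈ Finset.Iio (⟨k, hkd'⟩ : Fin d), p i
              = ∑ i ∈ Finset.Iio (⟨k, hkd'⟩ : Fin d), q i
              + ∑ i ∈ Finset.Iio (⟨k, hkd'⟩ : Fin d), (p i - q i) := by
            rw [← Finset.sum_add_distrib]
            exact Finset.sum_congr rfl fun i _ => by ring
          have e2 : ∑ i ∈ Finset.Iio (⟨k, hkd'⟩ : Fin d), (p i - q i) = ε := by
            rw [Finset.sum_congr rfl fun i _ => hdiff i, Finset.sum_add_distrib,
              sum_ite_val hd0 (fun _ => ε)
                (by simp [Finset.mem_Iio, Fin.lt_def]; omega),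
              Finset.sum_eq_zero (fun i hi => by
                have : (i : ℕ) < k := by simpa [Finset.mem_Iio, Fin.lt_def] using hi
                have : (i : ℕ) ≠ d - 1 := by omega
                simp [this])]
            ring
          rw [e1, e2]
        rw [← hps]
        exact le_kMaxSum p hcard
      have hup : kMaxSum w k ≤ (∑ i ∈ Finset.Iio (⟨k, hkd'⟩ : Fin d), q i) + ε := by
        refine kMaxSum_le w hkd'.le ?_
        intro s hs
        exact w_side q w ε hsort hq1 hw1 hwtv hkd' hs
      linarith
  · -- Case 2
    have hQ0 : 0 ≤ Qsum q ℓ := by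
      refine Finset.sum_nonneg fun i _ => ?_
      split_ifs
      · exact hq0 _
      · exact le_refl 0
    rcases hcase with ⟨hℓeq, rfl⟩ | ⟨hℓlt, rfl⟩
    · -- Case 2a : ℓ = d - 1, p = e₀
      set p : Fin d → ℝ := fun i : Fin d => if (i : ℕ) = 0 then 1 else 0 with hpdef
      subst hℓeq
      have hq0le1 : q ⟨0, hd0⟩ ≤ 1 := by
        rw [← hq1]
        exact Finset.single_le_sum (fun i _ => hq0 i) (Finset.mem_univ _)
      have hQval : Qsum q (d - 1) = 1 - q ⟨0, hd0⟩ := by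
        have e1 : ∀ i : Fin d, (if d - (d - 1) ≤ (i : ℕ) then q i else 0)
            = q i - (if (i : ℕ) = 0 then q i else 0) := by
          intro i
          split_ifs <;> first | ring1 | omega
        rw [Qsum, Finset.sum_congr rfl fun i _ => e1 i, Finset.sum_sub_distrib, hq1,
          sum_ite_val hd0 q (Finset.mem_univ _)]
      have hQε : 1 - q ⟨0, hd0⟩ ≤ ε := by rw [← hQval]; exact hQ
      have hsump : ∑ i, p i = 1 := by
        simp only [hpdef]
        rw [sum_ite_val hd0 (fun _ => (1:ℝ)) (Finset.mem_univ _)]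
      have habs : ∀ i : Fin d, |p i - q i|
          = (if (i : ℕ) = 0 then 1 - 2 * q i else 0) + q i := by
        intro i
        simp only [hpdef]
        split_ifs with h1
        · have : i = ⟨0, hd0⟩ := Fin.ext h1
          subst this
          rw [abs_of_nonneg (by linarith)]
          ring
        · rw [abs_of_nonpos (by have := hq0 i; linarith)]
          ring
      have habssum : ∑ i, |p i - q i| = 2 - 2 * q ⟨0, hd0⟩ := by
        rw [Finset.sum_congr rfl fun i _ => habs i, Finset.sum_add_distrib,
          sum_ite_val hd0 (fun i => 1 - 2 * q i) (Finset.mem_univ _), hq1]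
        ring
      refine ⟨⟨?_, hsump, by rw [habssum]; linarith⟩, ?_⟩
      · intro i
        simp only [hpdef]
        split_ifs <;> norm_num
      · intro w hw0 hw1 hwtv
        refine ⟨?_, by rw [hw1, hsump]⟩
        intro k hk1 hkd
        have hkd' : k < d := by omega
        have hlow : (1 : ℝ) ≤ kMaxSum p k := by
          have hcard : (Finset.Iio (⟨k, hkd'⟩ : Fin d)).card = k := Fin.card_Iio _
          have hps : ∑ i ∈ Finset.Iio (⟨k, hkd'⟩ : Fin d), p i = 1 := by
            simp only [hpdef]
            rw [sum_ite_val hd0 (fun _ => (1:ℝ))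
              (by simp [Finset.mem_Iio, Fin.lt_def]; omega)]
          rw [← hps]
          exact le_kMaxSum p hcard
        have hup : kMaxSum w k ≤ 1 :=
          kMaxSum_le w hkd'.le fun s _ => sum_le_one w hw0 hw1 s
        linarith
    · -- Case 2b : ℓ < d - 1
      set p : Fin d → ℝ := fun i : Fin d =>
        if (i : ℕ) = 0 then q i + ε
        else if (i : ℕ) < d - ℓ - 1 then q i
        else if (i : ℕ) = d - ℓ - 1 then q i - (ε - Qsum q ℓ) else 0 with hpdef
      have hj0 : d - ℓ - 1 < d := by omega
      have hQsplit : Qsum q (ℓ + 1) = q ⟨d - ℓ - 1, hj0⟩ + Qsum q ℓ := by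
        have e1 : ∀ i : Fin d, (if d - (ℓ + 1) ≤ (i : ℕ) then q i else 0)
            = (if (i : ℕ) = d - ℓ - 1 then q i else 0)
              + (if d - ℓ ≤ (i : ℕ) then q i else 0) := by
          intro i
          split_ifs <;> first | ring1 | omega
        rw [Qsum, Finset.sum_congr rfl fun i _ => e1 i, Finset.sum_add_distrib,
          sum_ite_val hj0 q (Finset.mem_univ _)]
        rfl
      have hQ1 : ε < Qsum q (ℓ + 1) := hQmax (ℓ + 1) (Nat.lt_succ_self ℓ) (by omega)
      have hqj0 : ε - Qsum q ℓ < q ⟨d - ℓ - 1, hj0⟩ := by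
        rw [hQsplit] at hQ1; linarith
      have hdiff : ∀ i : Fin d, p i - q i
          = (if (i : ℕ) = 0 then ε else 0)
            + (if (i : ℕ) = d - ℓ - 1 then -(ε - Qsum q ℓ) else 0)
            + (if d - ℓ ≤ (i : ℕ) then -q i else 0) := by
        intro i
        simp only [hpdef]
        split_ifs <;> first | ring1 | omega
      have htail : ∑ i : Fin d, (if d - ℓ ≤ (i : ℕ) then -q i else 0) = -(Qsum q ℓ) := by
        rw [show (∑ i : Fin d, (if d - ℓ ≤ (i : ℕ) then -q i else 0))
            = ∑ i : Fin d, -(if d - ℓ ≤ (i : ℕ) then q i else 0) from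
            Finset.sum_congr rfl fun i _ => by split_ifs <;> ring,
          Finset.sum_neg_distrib]
        rfl
      have hsum0 : ∑ i, (p i - q i) = 0 := by
        rw [Finset.sum_congr rfl fun i _ => hdiff i, Finset.sum_add_distrib,
          Finset.sum_add_distrib,
          sum_ite_val hd0 (fun _ => ε) (Finset.mem_univ _),
          sum_ite_val hj0 (fun _ => -(ε - Qsum q ℓ)) (Finset.mem_univ _), htail]
        ring
      have hsump : ∑ i, p i = 1 := by
        have : ∑ i, p i = ∑ i, q i + ∑ i, (p i - q i) := by
          rw [← Finset.sum_add_distrib]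
          exact Finset.sum_congr rfl fun i _ => by ring
        rw [this, hsum0, hq1]; ring
      have habs : ∀ i : Fin d, |p i - q i|
          = (if (i : ℕ) = 0 then ε else 0)
            + (if (i : ℕ) = d - ℓ - 1 then (ε - Qsum q ℓ) else 0)
            + (if d - ℓ ≤ (i : ℕ) then q i else 0) := by
        intro i
        rw [hdiff i]
        split_ifs <;>
          first
          | omega
          | (exfalso; omega)
          | (simp only [add_zero, zero_add, abs_neg];
             rw [abs_of_nonneg (by linarith [hq0 i])])
      have habssum : ∑ i, |p i - q i| = 2 * ε := by
        rw [Finset.sum_congr rfl fun i _ => habs i, Finset.sum_add_distrib,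
          Finset.sum_add_distrib,
          sum_ite_val hd0 (fun _ => ε) (Finset.mem_univ _),
          sum_ite_val hj0 (fun _ => (ε - Qsum q ℓ)) (Finset.mem_univ _),
          show (∑ i : Fin d, (if d - ℓ ≤ (i : ℕ) then q i else 0)) = Qsum q ℓ from rfl]
        ring
      refine ⟨⟨?_, hsump, by rw [habssum]; linarith⟩, ?_⟩
      · intro i
        simp only [hpdef]
        split_ifs with h1 h2 h3
        · have := hq0 i; linarith
        · exact hq0 i
        · have : i = ⟨d - ℓ - 1, hj0⟩ := Fin.ext h3
          subst this
          linarith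
        · exact le_refl 0
      · intro w hw0 hw1 hwtv
        refine ⟨?_, by rw [hw1, hsump]⟩
        intro k hk1 hkd
        have hkd' : k < d := by omega
        by_cases hksmall : k ≤ d - ℓ - 1
        · have hlow : (∑ i ∈ Finset.Iio (⟨k, hkd'⟩ : Fin d), q i) + ε ≤ kMaxSum p k := by
            have hcard : (Finset.Iio (⟨k, hkd'⟩ : Fin d)).card = k := Fin.card_Iio _
            have hps : ∑ i ∈ Finset.Iio (⟨k, hkd'⟩ : Fin d), p i
                = (∑ i ∈ Finset.Iio (⟨k, hkd'⟩ : Fin d), q i) + ε := by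
              have e1 : ∑ i ∈ Finset.Iio (⟨k, hkd'⟩ : Fin d), p i
                  = ∑ i ∈ Finset.Iio (⟨k, hkd'⟩ : Fin d), q i
                  + ∑ i ∈ Finset.Iio (⟨k, hkd'⟩ : Fin d), (p i - q i) := by
                rw [← Finset.sum_add_distrib]
                exact Finset.sum_congr rfl fun i _ => by ring
              have e2 : ∑ i ∈ Finset.Iio (⟨k, hkd'⟩ : Fin d), (p i - q i) = ε := by
                rw [Finset.sum_congr rfl fun i _ => hdiff i, Finset.sum_add_distrib,
                  Finset.sum_add_distrib,
                  sum_ite_val hd0 (fun _ => ε)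
                    (by simp [Finset.mem_Iio, Fin.lt_def]; omega),
                  Finset.sum_eq_zero (fun i hi => by
                    have hik : (i : ℕ) < k := by
                      simpa [Finset.mem_Iio, Fin.lt_def] using hi
                    have : (i : ℕ) ≠ d - ℓ - 1 := by omega
                    simp [this]),
                  Finset.sum_eq_zero (fun i hi => by
                    have hik : (i : ℕ) < k := by
                      simpa [Finset.mem_Iio, Fin.lt_def] using hi
                    have : ¬ d - ℓ ≤ (i : ℕ) := by omega
                    simp [this])]
                ring
              rw [e1, e2]
            rw [← hps]
            exact le_kMaxSum p hcard
          have hup : kMaxSum w k ≤ (∑ i ∈ Finset.Iio (⟨k, hkd'⟩ : Fin d), q i) + ε := by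
            refine kMaxSum_le w hkd'.le ?_
            intro s hs
            exact w_side q w ε hsort hq1 hw1 hwtv hkd' hs
          linarith
        · have hlow : (1 : ℝ) ≤ kMaxSum p k := by
            have hcard : (Finset.Iio (⟨k, hkd'⟩ : Fin d)).card = k := Fin.card_Iio _
            have hps : ∑ i ∈ Finset.Iio (⟨k, hkd'⟩ : Fin d), p i = 1 := by
              rw [← hsump]
              refine Finset.sum_subset (Finset.subset_univ _) ?_
              intro i _ hi
              have hik : ¬ (i : ℕ) < k := by
                simpa [Finset.mem_Iio, Fin.lt_def] using hi
              simp only [hpdef]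
              have h1 : (i : ℕ) ≠ 0 := by omega
              have h2 : ¬ (i : ℕ) < d - ℓ - 1 := by omega
              have h3 : (i : ℕ) ≠ d - ℓ - 1 := by omega
              simp [h1, h2, h3]
            rw [← hps]
            exact le_kMaxSum p hcard
          have hup : kMaxSum w k ≤ 1 :=
            kMaxSum_le w hkd'.le fun s _ => sum_le_one w hw0 hw1 s
          linarith
end
end
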